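/- Let R be a ring and I a nil ideal of R. Then R is nil-clean if and only if R/I is nil-clean. -/

import Mathlib

/-- A ring is nil-clean if every element is the sum of an idempotent and a nilpotent. -/
def IsNilCleanRing (R : Type*) [Ring R] : Prop :=
  ∀ a : R, ∃ e q : R, IsIdempotentElem e ∧ IsNilpotent q ∧ a = e + q

theorem stmt0 (R : Type*) [Ring R] (I : TwoSidedIdeal R)
    (hnil : ∀ a ∈ I, IsNilpotent a) :
    IsNilCleanRing R ↔ IsNilCleanRing I.ringCon.Quotient := by
  set f : R →+* I.ringCon.Quotient := I.ringCon.mk'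
  have hker : ∀ x ∈ RingHom.ker f, IsNilpotent x := by
    intro x hx
    apply hnil
    rw [RingHom.mem_ker] at hx
    have : I.ringCon x 0 := I.ringCon.eq.mp (by exact hx)
    rwa [TwoSidedIdeal.mem_iff]
  constructor
  · intro h a
    obtain ⟨r, rfl⟩ := I.ringCon.mk'_surjective a
    obtain ⟨e, q, he, hq, rfl⟩ := h r
    exact ⟨f e, f q, he.map f, hq.map f, map_add f e q⟩
  · intro h a
    obtain ⟨e, q, he, hq, hsum⟩ := h (f a)
    obtain ⟨e', he', hfe⟩ := exists_isIdempotentElem_eq_of_ker_isNilpotent f hker e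
      (I.ringCon.mk'_surjective e) he
    refine ⟨e', a - e', he', ?_, by abel⟩
    obtain ⟨n, hn⟩ := hq
    have hmem : (a - e') ^ n ∈ RingHom.ker f := by
      rw [RingHom.mem_ker, map_pow, map_sub, hfe]
      have : f a - e = q := by rw [hsum]; abel
      rw [this, hn]
    obtain ⟨m, hm⟩ := hker _ hmem
    exact ⟨n * m, by rw [pow_mul, hm]⟩
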